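/- arXiv:cs/0207084 — 2 statements merged into one kernel-verified Lean document; each statement's English description precedes it below -/
import Mathlib

section
/- Let S = {φ_1,…,φ_n} and T be finite sets of propositional formulas, P = var(S ∪ T), and G = {g_1,…,g_n} a set of fresh atoms not occurring in S ∪ T. For S' ⊆ S let M_{S'} ⊆ G be the interpretation with g_i ∈ M_{S'} iff φ_i ∈ S'. Then T ∪ S' is consistent if and only if the quantified Boolean formula C[T,S] = ∃P (T ∧ (G ≤ S)) is true under M_{S'}. -/
namespace Para

/-- Propositional formulas over an alphabet `α`. -/
inductive Fml (α : Type) : Type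
  | atom : α → Fml α
  | top : Fml α
  | bot : Fml α
  | neg : Fml α → Fml α
  | conj : Fml α → Fml α → Fml α
  | disj : Fml α → Fml α → Fml α
  | impl : Fml α → Fml α → Fml α

namespace Fml

variable {α β : Type}

/-- Biconditional `a ≡ b`. -/
def iff' (a b : Fml α) : Fml α := conj (impl a b) (impl b a)

/-- Classical satisfaction: truth of a formula under an interpretation
(a set of atoms, those being true). -/
def holds (M : Set α) : Fml α → Prop
  | atom p => p ∈ M
  | top => True
  | bot => False
  | neg φ => ¬ holds M φ
  | conj φ ψ => holds M φ ∧ holds M ψ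
  | disj φ ψ => holds M φ ∨ holds M ψ
  | impl φ ψ => holds M φ → holds M ψ

/-- The set of atoms occurring in a formula. -/
def atoms : Fml α → Set α
  | atom p => {p}
  | top => ∅
  | bot => ∅
  | neg φ => atoms φ
  | conj φ ψ => atoms φ ∪ atoms ψ
  | disj φ ψ => atoms φ ∪ atoms ψ
  | impl φ ψ => atoms φ ∪ atoms ψ

/-- Renaming of atoms. -/
def map (f : α → β) : Fml α → Fml β
  | atom p => atom (f p)
  | top => top
  | bot => bot
  | neg φ => neg (map f φ)
  | conj φ ψ => conj (map f φ) (map f ψ)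
  | disj φ ψ => disj (map f φ) (map f ψ)
  | impl φ ψ => impl (map f φ) (map f ψ)

end Fml

/-- Classical consequence (= derivability, by soundness and completeness of
classical propositional logic). -/
def Entails {α : Type} (S : Set (Fml α)) (φ : Fml α) : Prop :=
  ∀ M : Set α, (∀ ψ ∈ S, ψ.holds M) → φ.holds M

/-- Deductive closure `Cn`. -/
def Cn {α : Type} (S : Set (Fml α)) : Set (Fml α) := {φ | Entails S φ}

/-- Consistency: `⊥ ∉ Cn S`. -/
def Consistent {α : Type} (S : Set (Fml α)) : Prop := Fml.bot ∉ Cn S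

/-- The atoms occurring in a set of formulas, `var(S)`. -/
def vars {α : Type} (S : Set (Fml α)) : Set α := ⋃ φ ∈ S, φ.atoms

/-- The alphabet `Σ ∪ Σ^±`: original atoms `p`, positive atoms `p⁺`,
negative atoms `p⁻`. -/
inductive XAtom (α : Type) : Type
  | orig : α → XAtom α
  | pos : α → XAtom α
  | neg : α → XAtom α

/-- Signed translation with a polarity flag (`true` = positive occurrence):
positive occurrences of `p` become `p⁺`, negative ones become `¬p⁻`. -/
def signedAux {α : Type} : Fml α → Bool → Fml (XAtom α)
  | .atom p, true => .atom (.pos p)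
  | .atom p, false => .neg (.atom (.neg p))
  | .top, _ => .top
  | .bot, _ => .bot
  | .neg φ, b => .neg (signedAux φ (!b))
  | .conj φ ψ, b => .conj (signedAux φ b) (signedAux ψ b)
  | .disj φ ψ, b => .disj (signedAux φ b) (signedAux ψ b)
  | .impl φ ψ, b => .impl (signedAux φ (!b)) (signedAux ψ b)

/-- The signed translation `α^±`. -/
def signed {α : Type} (φ : Fml α) : Fml (XAtom α) := signedAux φ true

/-- Embedding of `L_Σ` into `L_{Σ∪Σ^±}`. -/
def emb {α : Type} : Fml α → Fml (XAtom α) := Fml.map XAtom.orig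

/-- `W^± = {α^± | α ∈ W}`. -/
def signedSet {α : Type} (W : Set (Fml α)) : Set (Fml (XAtom α)) := signed '' W

/-- A default rule `(pre : jus / con)`. -/
structure Dflt (α : Type) where
  pre : Fml α
  jus : Fml α
  con : Fml α

/-- Atoms occurring in a default rule. -/
def Dflt.atoms {α : Type} (d : Dflt α) : Set α :=
  d.pre.atoms ∪ d.jus.atoms ∪ d.con.atoms

/-- The Reiter sequence `E_1 = V`, `E_{n+1} = Cn(E_n) ∪ {γ | (α:β/γ) ∈ D, α ∈ E_n, ¬β ∉ E}`
(0-indexed here). -/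
def extSeq {α : Type} (D : Set (Dflt α)) (V E : Set (Fml α)) : ℕ → Set (Fml α)
  | 0 => V
  | n+1 => Cn (extSeq D V E n) ∪
      {γ | ∃ d ∈ D, d.con = γ ∧ d.pre ∈ extSeq D V E n ∧ Fml.neg d.jus ∉ E}

/-- `E` is a (Reiter) extension of the default theory `(D, V)`. -/
def IsExtension {α : Type} (D : Set (Dflt α)) (V E : Set (Fml α)) : Prop :=
  E = ⋃ n, extSeq D V E n

/-- `E` is a hierarchic extension of `(⋃ n, Dn n, V)` with respect to the
partition `⟨Dn⟩`: `E = ⋃ En` where `E_0 = V` and `E_{n+1}` is an extension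
of `(Dn n, En n)`. -/
def IsHierExtension {α : Type} (Dn : ℕ → Set (Dflt α)) (V E : Set (Fml α)) : Prop :=
  ∃ En : ℕ → Set (Fml α), En 0 = V ∧ (∀ n, IsExtension (Dn n) (En n) (En (n+1))) ∧
    E = ⋃ n, En n

/-- The signed default `δ_p = ( : p⁺≡¬p⁻ / (p≡p⁺)∧(¬p≡p⁻) )`. -/
def deltap {α : Type} (p : α) : Dflt (XAtom α) where
  pre := .top
  jus := Fml.iff' (.atom (.pos p)) (.neg (.atom (.neg p)))
  con := .conj (Fml.iff' (.atom (.orig p)) (.atom (.pos p)))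
               (Fml.iff' (.neg (.atom (.orig p))) (.atom (.neg p)))

/-- `D_Σ = {δ_p | p ∈ Σ}`. -/
def DSigma (α : Type) : Set (Dflt (XAtom α)) := Set.range (deltap (α := α))

/-- `Π_S = {c(δ_p) | p ∈ Σ, ¬j(δ_p) ∉ S}`. -/
def PiSet {α : Type} (S : Set (Fml (XAtom α))) : Set (Fml (XAtom α)) :=
  {f | ∃ p : α, Fml.neg (deltap p).jus ∉ S ∧ f = (deltap p).con}

/-- The set of all extensions of `(D_Σ, W^±)`. -/
def Exts {α : Type} (W : Set (Fml α)) : Set (Set (Fml (XAtom α))) :=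
  {E | IsExtension (DSigma α) (signedSet W) E}

/-- Credulous unsigned consequence `W ⊢_c φ`. -/
def CredU {α : Type} (W : Set (Fml α)) (φ : Fml α) : Prop :=
  ∃ E ∈ Exts W, emb φ ∈ Cn (signedSet W ∪ PiSet E)

/-- Skeptical unsigned consequence `W ⊢_s φ`. -/
def SkepU {α : Type} (W : Set (Fml α)) (φ : Fml α) : Prop :=
  ∀ E ∈ Exts W, emb φ ∈ Cn (signedSet W ∪ PiSet E)

/-- Prudent unsigned consequence `W ⊢_p φ`. -/
def PrudU {α : Type} (W : Set (Fml α)) (φ : Fml α) : Prop :=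
  emb φ ∈ Cn (signedSet W ∪ ⋂ E ∈ Exts W, PiSet E)

/-- Credulous signed consequence `W ⊢_c^± φ`. -/
def CredS {α : Type} (W : Set (Fml α)) (φ : Fml α) : Prop :=
  ∃ E ∈ Exts W, signed φ ∈ Cn (signedSet W ∪ PiSet E)

/-- Skeptical signed consequence `W ⊢_s^± φ`. -/
def SkepS {α : Type} (W : Set (Fml α)) (φ : Fml α) : Prop :=
  ∀ E ∈ Exts W, signed φ ∈ Cn (signedSet W ∪ PiSet E)

/-- Prudent signed consequence `W ⊢_p^± φ`. -/
def PrudS {α : Type} (W : Set (Fml α)) (φ : Fml α) : Prop :=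
  signed φ ∈ Cn (signedSet W ∪ ⋂ E ∈ Exts W, PiSet E)

def Cc {α : Type} (W : Set (Fml α)) : Set (Fml α) := {φ | CredU W φ}
def Cs {α : Type} (W : Set (Fml α)) : Set (Fml α) := {φ | SkepU W φ}
def Cp {α : Type} (W : Set (Fml α)) : Set (Fml α) := {φ | PrudU W φ}
def CcPM {α : Type} (W : Set (Fml α)) : Set (Fml α) := {φ | CredS W φ}
def CsPM {α : Type} (W : Set (Fml α)) : Set (Fml α) := {φ | SkepS W φ}
def CpPM {α : Type} (W : Set (Fml α)) : Set (Fml α) := {φ | PrudS W φ}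

/-- `J'` is a maximal subset of `J` consistent with `V`. -/
def IsMaxConsSub {α : Type} (V J' J : Set (Fml α)) : Prop :=
  J' ⊆ J ∧ Consistent (V ∪ J') ∧
    ∀ J'', J' ⊆ J'' → J'' ⊆ J → Consistent (V ∪ J'') → J'' = J'

/-- Quantified Boolean formulas over an alphabet `α`. -/
inductive QBF (α : Type) : Type
  | atom : α → QBF α
  | top : QBF α
  | bot : QBF α
  | neg : QBF α → QBF α
  | conj : QBF α → QBF α → QBF α
  | disj : QBF α → QBF α → QBF α
  | impl : QBF α → QBF α → QBF α
  | all : α → QBF α → QBF α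
  | ex : α → QBF α → QBF α

/-- Truth of a QBF under an interpretation (a set of atoms):
`∀p Ψ` is true iff `Ψ` is true with `p` set to true and with `p` set to false,
dually for `∃p Ψ`. -/
def QBF.holds {α : Type} : Set α → QBF α → Prop
  | M, .atom p => p ∈ M
  | _, .top => True
  | _, .bot => False
  | M, .neg Φ => ¬ QBF.holds M Φ
  | M, .conj Φ Ψ => QBF.holds M Φ ∧ QBF.holds M Ψ
  | M, .disj Φ Ψ => QBF.holds M Φ ∨ QBF.holds M Ψ
  | M, .impl Φ Ψ => QBF.holds M Φ → QBF.holds M Ψ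
  | M, .all p Φ => QBF.holds (M ∪ {p}) Φ ∧ QBF.holds (M \ {p}) Φ
  | M, .ex p Φ => QBF.holds (M ∪ {p}) Φ ∨ QBF.holds (M \ {p}) Φ

/-- A QBF is valid iff it is true under every interpretation. -/
def QBF.Valid {α : Type} (Φ : QBF α) : Prop := ∀ M : Set α, Φ.holds M

/-- Propositional formulas are (quantifier-free) QBFs. -/
def Fml.toQBF {α : Type} : Fml α → QBF α
  | .atom p => .atom p
  | .top => .top
  | .bot => .bot
  | .neg φ => .neg φ.toQBF
  | .conj φ ψ => .conj φ.toQBF ψ.toQBF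
  | .disj φ ψ => .disj φ.toQBF ψ.toQBF
  | .impl φ ψ => .impl φ.toQBF ψ.toQBF

/-- Conjunction of a finite list of QBFs. -/
def QBF.conjList {α : Type} (l : List (QBF α)) : QBF α := l.foldr QBF.conj QBF.top

/-- `∃P Φ`: block of existential quantifiers over the atoms in `P`. -/
def QBF.exList {α : Type} (P : List α) (Φ : QBF α) : QBF α := P.foldr QBF.ex Φ

/-- `∀P Φ`: block of universal quantifiers over the atoms in `P`. -/
def QBF.allList {α : Type} (P : List α) (Φ : QBF α) : QBF α := P.foldr QBF.all Φ

/-- The module `C[T,S] = ∃P (T ∧ (G ≤ S))`, where `T` is given as the list `Ts`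
of its elements and the pairs `(g_i, φ_i)` encode `G ≤ S = ⋀ (g_i → φ_i)`. -/
def CMod {α : Type} (P : List α) (Ts : List (Fml α)) (pairs : List (α × Fml α)) : QBF α :=
  QBF.exList P (QBF.conj (QBF.conjList (Ts.map Fml.toQBF))
    (QBF.conjList (pairs.map (fun gp => QBF.impl (QBF.atom gp.1) gp.2.toQBF))))

/-- The module `Ext[T]` for a finite default theory `T = (D,V)` with
`D = {δ_1,…,δ_n}` and guessing atoms `g_1,…,g_n`:
`C[V, j(D)] ∧ ⋀_i (¬g_i → ¬ C[V ∪ {j(δ_i)}, j(D \ {δ_i})])`. -/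
def ExtMod {α : Type} {n : ℕ} (P : List α) (Vl : List (Fml α))
    (δ : Fin n → Dflt α) (g : Fin n → α) : QBF α :=
  QBF.conj
    (CMod P Vl ((List.finRange n).map fun i => (g i, (δ i).jus)))
    (QBF.conjList ((List.finRange n).map fun i =>
      QBF.impl (QBF.neg (QBF.atom (g i)))
        (QBF.neg (CMod P (Vl ++ [(δ i).jus])
          (((List.finRange n).filter (fun j => j != i)).map fun j => (g j, (δ j).jus))))))

/-- The module `Conseq[T,φ] = ∀P' (V ∧ (G ≤ c(D)) → φ)`. -/
def ConseqMod {α : Type} {n : ℕ} (P' : List α) (Vl : List (Fml α))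
    (δ : Fin n → Dflt α) (g : Fin n → α) (φ : Fml α) : QBF α :=
  QBF.allList P'
    (QBF.impl
      (QBF.conj (QBF.conjList (Vl.map Fml.toQBF))
        (QBF.conjList ((List.finRange n).map fun i =>
          QBF.impl (QBF.atom (g i)) (δ i).con.toQBF)))
      φ.toQBF)


lemma holds_congr {α : Type} (ψ : Fml α) {M M' : Set α}
    (h : ∀ a ∈ ψ.atoms, (a ∈ M ↔ a ∈ M')) : ψ.holds M ↔ ψ.holds M' := by
  induction ψ with
  | atom p => exact h p rfl
  | top => exact Iff.rfl
  | bot => exact Iff.rfl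
  | neg φ ih => exact not_congr (ih h)
  | conj φ χ ih1 ih2 =>
    exact and_congr (ih1 fun a ha => h a (Or.inl ha)) (ih2 fun a ha => h a (Or.inr ha))
  | disj φ χ ih1 ih2 =>
    exact or_congr (ih1 fun a ha => h a (Or.inl ha)) (ih2 fun a ha => h a (Or.inr ha))
  | impl φ χ ih1 ih2 =>
    exact imp_congr (ih1 fun a ha => h a (Or.inl ha)) (ih2 fun a ha => h a (Or.inr ha))

lemma toQBF_holds {α : Type} (ψ : Fml α) (M : Set α) :
    QBF.holds M ψ.toQBF ↔ ψ.holds M := by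
  induction ψ <;> simp [Fml.toQBF, QBF.holds, Fml.holds, *]

lemma conjList_holds {α : Type} (l : List (QBF α)) (M : Set α) :
    QBF.holds M (QBF.conjList l) ↔ ∀ Φ ∈ l, QBF.holds M Φ := by
  induction l with
  | nil => simp [QBF.conjList, QBF.holds]
  | cons a l ih =>
    simp only [QBF.conjList, List.foldr] at ih ⊢
    show QBF.holds M a ∧ _ ↔ _
    rw [ih]; simp

lemma exList_holds {α : Type} (P : List α) (Φ : QBF α) (M : Set α) :
    QBF.holds M (QBF.exList P Φ) ↔
      ∃ M', (∀ a, a ∉ P → (a ∈ M' ↔ a ∈ M)) ∧ QBF.holds M' Φ := by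
  induction P generalizing M with
  | nil =>
    simp only [QBF.exList, List.foldr, List.not_mem_nil, not_false_iff, forall_true_left]
    constructor
    · exact fun h => ⟨M, fun a => Iff.rfl, h⟩
    · rintro ⟨M', hM', h⟩
      have : M' = M := Set.ext fun a => hM' a
      rwa [this] at h
  | cons p P ih =>
    show QBF.holds (M ∪ {p}) _ ∨ QBF.holds (M \ {p}) _ ↔ _
    simp only [QBF.exList] at ih
    rw [ih, ih]
    constructor
    · rintro (⟨M', hM', h⟩ | ⟨M', hM', h⟩) <;> refine ⟨M', fun a ha => ?_, h⟩
      · rw [hM' a (fun hmem => ha (List.mem_cons_of_mem _ hmem))]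
        have hap : a ≠ p := fun h' => ha (h' ▸ List.mem_cons_self)
        simp [hap]
      · rw [hM' a (fun hmem => ha (List.mem_cons_of_mem _ hmem))]
        have hap : a ≠ p := fun h' => ha (h' ▸ List.mem_cons_self)
        simp [hap]
    · rintro ⟨M', hM', h⟩
      by_cases hp : p ∈ M'
      · refine Or.inl ⟨M', fun a ha => ?_, h⟩
        by_cases hap : a = p
        · subst hap; simp [hp]
        · rw [hM' a (by simp [ha, hap])]; simp [hap]
      · refine Or.inr ⟨M', fun a ha => ?_, h⟩
        by_cases hap : a = p
        · subst hap; simp [hp]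
        · rw [hM' a (by simp [ha, hap])]; simp [hap]

lemma consistent_iff {α : Type} (S : Set (Fml α)) :
    Consistent S ↔ ∃ M, ∀ ψ ∈ S, ψ.holds M := by
  simp only [Consistent, Cn, Entails, Set.mem_setOf_eq, Fml.holds]
  push_neg
  simp

/-- For finite sets `S = {φ_1,…,φ_n}` (given as the indexed family
`φ`) and `T` (given as the list `Tl` of its elements), `P = var(S ∪ T)`, fresh
guessing atoms `g_1,…,g_n`, and `S' ⊆ S` with interpretation
`M_{S'} = {g_i | φ_i ∈ S'}`: `T ∪ S'` is consistent iff the QBF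
`C[T,S] = ∃P (T ∧ (G ≤ S))` is true under `M_{S'}`. -/
theorem consistency_QBF_encoding {α : Type} {n : ℕ} (φ : Fin n → Fml α)
    (Tl : List (Fml α)) (g : Fin n → α) (hginj : Function.Injective g)
    (hfresh : ∀ i, g i ∉ vars (Set.range φ ∪ {ψ | ψ ∈ Tl}))
    (P : List α) (hP : ∀ a, a ∈ P ↔ a ∈ vars (Set.range φ ∪ {ψ | ψ ∈ Tl}))
    (S' : Set (Fml α)) (hS' : S' ⊆ Set.range φ) :
    Consistent ({ψ | ψ ∈ Tl} ∪ S') ↔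
      QBF.holds {a | ∃ i, φ i ∈ S' ∧ g i = a}
        (CMod P Tl ((List.finRange n).map (fun i => (g i, φ i)))) := by
  set M0 : Set α := {a | ∃ i, φ i ∈ S' ∧ g i = a} with hM0
  have hvarP : ∀ (χ : Fml α), (χ ∈ Set.range φ ∪ {ψ | ψ ∈ Tl}) → ∀ a ∈ χ.atoms, a ∈ P := by
    intro χ hχ a ha
    rw [hP]
    exact Set.mem_biUnion hχ ha
  have hgP : ∀ i, g i ∉ P := fun i hmem => hfresh i ((hP (g i)).1 hmem)
  rw [CMod, exList_holds]
  constructor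
  · intro hcons
    rw [consistent_iff] at hcons
    obtain ⟨M, hM⟩ := hcons
    refine ⟨{a | a ∈ P ∧ a ∈ M} ∪ {a | a ∉ P ∧ a ∈ M0}, ?_, ?_, ?_⟩
    · intro a ha
      simp [Set.mem_setOf_eq, ha]
    · rw [conjList_holds]
      intro Φ hΦ
      simp only [List.mem_map] at hΦ
      obtain ⟨ψ, hψ, rfl⟩ := hΦ
      rw [toQBF_holds]
      rw [holds_congr ψ (M' := M) ?_]
      · exact hM ψ (Or.inl hψ)
      · intro a ha
        have haP : a ∈ P := hvarP ψ (Or.inr hψ) a ha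
        simp [Set.mem_setOf_eq, haP]
    · rw [conjList_holds]
      intro Φ hΦ
      simp only [List.map_map, List.mem_map, Function.comp] at hΦ
      obtain ⟨i, _, rfl⟩ := hΦ
      intro hgi
      have hgiM0 : g i ∈ M0 := by
        rcases hgi with h | h
        · exact absurd h.1 (hgP i)
        · exact h.2
      obtain ⟨j, hj, hji⟩ := hgiM0
      have : j = i := hginj hji
      subst this
      rw [toQBF_holds]
      rw [holds_congr (φ j) (M' := M) ?_]
      · exact hM (φ j) (Or.inr hj)
      · intro a ha
        have haP : a ∈ P := hvarP (φ j) (Or.inl ⟨j, rfl⟩) a ha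
        simp [Set.mem_setOf_eq, haP]
  · rintro ⟨M', hagree, hAB⟩
    obtain ⟨hA, hB⟩ : QBF.holds M' _ ∧ QBF.holds M' _ := hAB
    rw [conjList_holds] at hA hB
    rw [consistent_iff]
    refine ⟨M', fun ψ hψ => ?_⟩
    rcases hψ with hψ | hψ
    · have := hA ψ.toQBF (by simp only [List.mem_map]; exact ⟨ψ, hψ, rfl⟩)
      rwa [toQBF_holds] at this
    · obtain ⟨i, rfl⟩ := hS' hψ
      have hgi : g i ∈ M' := by
        rw [hagree (g i) (hgP i)]
        exact ⟨i, hψ, rfl⟩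
      have := hB (QBF.impl (QBF.atom (g i)) (φ i).toQBF)
        (by simp only [List.map_map, List.mem_map, Function.comp]
            exact ⟨i, List.mem_finRange i, rfl⟩)
      have := this hgi
      rwa [toQBF_holds] at this

end Para
end

section
/- For every finite set W ⊆ L_Σ of propositional formulas, the signed paraconsistent consequence operators are increasing in strength: C_p^±(W) ⊆ C_s^±(W) ⊆ C_c^±(W). -/
namespace Para

/-! ### Auxiliary lemmas -/

section Aux
variable {α : Type}

lemma subset_Cn' (S : Set (Fml α)) : S ⊆ Cn S := fun φ hφ M hM => hM φ hφ

lemma Cn_mono' {S T : Set (Fml α)} (h : S ⊆ T) : Cn S ⊆ Cn T :=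
  fun φ hφ M hM => hφ M fun ψ hψ => hM ψ (h hψ)

lemma Cn_idem' (S : Set (Fml α)) : Cn (Cn S) = Cn S := by
  apply Set.Subset.antisymm
  · intro φ hφ M hM
    exact hφ M (fun ψ hψ => hψ M hM)
  · exact subset_Cn' _

lemma holds_congr' {M M' : Set α} :
    ∀ {φ : Fml α}, (∀ a ∈ φ.atoms, (a ∈ M ↔ a ∈ M')) → (φ.holds M ↔ φ.holds M')
  | .atom p, h => h p rfl
  | .top, _ => Iff.rfl
  | .bot, _ => Iff.rfl
  | .neg φ, h => by
      simp only [Fml.holds]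
      exact not_congr (holds_congr' h)
  | .conj φ ψ, h => by
      simp only [Fml.holds, Fml.atoms] at *
      exact and_congr (holds_congr' fun a ha => h a (Or.inl ha))
        (holds_congr' fun a ha => h a (Or.inr ha))
  | .disj φ ψ, h => by
      simp only [Fml.holds, Fml.atoms] at *
      exact or_congr (holds_congr' fun a ha => h a (Or.inl ha))
        (holds_congr' fun a ha => h a (Or.inr ha))
  | .impl φ ψ, h => by
      simp only [Fml.holds, Fml.atoms] at *
      exact imp_congr (holds_congr' fun a ha => h a (Or.inl ha))
        (holds_congr' fun a ha => h a (Or.inr ha))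

lemma atoms_finite' (φ : Fml α) : φ.atoms.Finite := by
  induction φ <;> simp_all [Fml.atoms]

lemma holds_con' (M : Set (XAtom α)) (p : α) :
    (deltap p).con.holds M ↔
      ((XAtom.orig p ∈ M ↔ XAtom.pos p ∈ M) ∧ (XAtom.orig p ∉ M ↔ XAtom.neg p ∈ M)) := by
  simp only [deltap, Fml.iff', Fml.holds]
  tauto

lemma holds_jus' (M : Set (XAtom α)) (p : α) :
    (deltap p).jus.holds M ↔ (XAtom.pos p ∈ M ↔ XAtom.neg p ∉ M) := by
  simp only [deltap, Fml.iff', Fml.holds]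
  tauto

lemma atoms_con' (p : α) :
    (deltap p).con.atoms = {XAtom.orig p, XAtom.pos p, XAtom.neg p} := by
  simp only [deltap, Fml.iff', Fml.atoms]
  ext x
  simp
  tauto

lemma orig_not_mem_signedAux (q : α) :
    ∀ (φ : Fml α) (b : Bool), XAtom.orig q ∉ (signedAux φ b).atoms := by
  intro φ
  induction φ with
  | atom p => intro b; cases b <;> simp [signedAux, Fml.atoms]
  | top => intro b; simp [signedAux, Fml.atoms]
  | bot => intro b; simp [signedAux, Fml.atoms]
  | neg φ ih => intro b; simpa [signedAux, Fml.atoms] using ih (!b)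
  | conj φ ψ ih₁ ih₂ => intro b; simp [signedAux, Fml.atoms]; exact ⟨ih₁ b, ih₂ b⟩
  | disj φ ψ ih₁ ih₂ => intro b; simp [signedAux, Fml.atoms]; exact ⟨ih₁ b, ih₂ b⟩
  | impl φ ψ ih₁ ih₂ => intro b; simp [signedAux, Fml.atoms]; exact ⟨ih₁ (!b), ih₂ b⟩

/-- The consequents of the defaults for the atoms in `S`. -/
def consS (S : Set α) : Set (Fml (XAtom α)) := {f | ∃ p ∈ S, f = (deltap p).con}

lemma isExtension_of_fix (V : Set (Fml (XAtom α))) (S : Set α)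
    (hS : ∀ p : α, p ∈ S ↔ Fml.neg (deltap p).jus ∉ Cn (V ∪ consS S)) :
    IsExtension (DSigma α) V (Cn (V ∪ consS S)) := by
  set E := Cn (V ∪ consS S) with hE
  have hVE : V ⊆ E := (Set.subset_union_left).trans (subset_Cn' _)
  have hCE : consS S ⊆ E := (Set.subset_union_right).trans (subset_Cn' _)
  have hsub : ∀ n, extSeq (DSigma α) V E n ⊆ E := by
    intro n
    induction n with
    | zero => exact hVE
    | succ n ih =>
        intro γ hγ
        rcases hγ with h | ⟨d, ⟨p, rfl⟩, rfl, _, hjus⟩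
        · have : Cn (extSeq (DSigma α) V E n) ⊆ Cn E := Cn_mono' ih
          rw [hE, Cn_idem'] at this
          exact this h
        · exact hCE ⟨p, (hS p).mpr hjus, rfl⟩
  have htop : Fml.top ∈ extSeq (DSigma α) V E 1 := Or.inl (fun M _ => trivial)
  have h1 : Cn V ⊆ extSeq (DSigma α) V E 1 := fun φ h => Or.inl h
  have h2c : consS S ⊆ extSeq (DSigma α) V E 2 := by
    rintro f ⟨p, hp, rfl⟩
    exact Or.inr ⟨deltap p, ⟨p, rfl⟩, rfl, htop, (hS p).mp hp⟩
  have h2v : V ⊆ extSeq (DSigma α) V E 2 :=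
    fun φ h => Or.inl (subset_Cn' _ (h1 (subset_Cn' _ h)))
  have h3 : E ⊆ extSeq (DSigma α) V E 3 :=
    fun φ h => Or.inl (Cn_mono' (Set.union_subset h2v h2c) h)
  apply Set.Subset.antisymm
  · exact h3.trans (Set.subset_iUnion (extSeq (DSigma α) V E) 3)
  · exact Set.iUnion_subset hsub

/-- Projection `XAtom α → α`. -/
def xproj : XAtom α → α
  | .orig p => p
  | .pos p => p
  | .neg p => p

lemma exists_fix (V : Set (Fml (XAtom α))) (hV : (vars V).Finite)
    (horig : ∀ q : α, XAtom.orig q ∉ vars V) :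
    ∃ S : Set α, ∀ p : α, p ∈ S ↔ Fml.neg (deltap p).jus ∉ Cn (V ∪ consS S) := by
  by_cases hcon : ∃ M : Set (XAtom α), ∀ ψ ∈ V, ψ.holds M
  · -- consistent case
    set R : Set α := xproj '' vars V with hR
    have hRfin : R.Finite := hV.image _
    set F : Set (Set α) := {S | S ⊆ R ∧ ∃ M : Set (XAtom α), ∀ ψ ∈ V ∪ consS S, ψ.holds M}
      with hF
    have hFfin : F.Finite := hRfin.finite_subsets.subset (fun S hS => hS.1)
    have hFne : F.Nonempty := by
      obtain ⟨M, hM⟩ := hcon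
      refine ⟨∅, Set.empty_subset _, M, ?_⟩
      rintro ψ (h | ⟨p, hp, rfl⟩)
      · exact hM ψ h
      · exact absurd hp (Set.notMem_empty p)
    obtain ⟨S, hSF, hSmax⟩ : ∃ S ∈ F, ∀ S' ∈ F, id S ≤ id S' → id S = id S' := by
      obtain ⟨S, hSF, hSmax⟩ := Set.Finite.exists_maximalFor id F hFfin hFne
      exact ⟨S, hSF, fun S' h1 h2 => le_antisymm h2 (hSmax h1 h2)⟩
    -- the fixpoint set
    refine ⟨S ∪ Rᶜ, ?_⟩
    obtain ⟨hSR, M₀, hM₀⟩ := hSF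
    -- the "big" model of V ∪ consS (S ∪ Rᶜ)
    set M : Set (XAtom α) := {x | match x with
      | .orig p => xproj x ∈ R → x ∈ M₀
      | .pos p => xproj x ∈ R → x ∈ M₀
      | .neg p => xproj x ∈ R ∧ x ∈ M₀} with hMdef
    have hagree : ∀ x : XAtom α, xproj x ∈ R → (x ∈ M ↔ x ∈ M₀) := by
      intro x hx
      cases x <;> simp [hMdef, hx]
    have hMmod : ∀ ψ ∈ V ∪ consS (S ∪ Rᶜ), ψ.holds M := by
      rintro ψ (h | ⟨p, hp, rfl⟩)
      · refine (holds_congr' ?_).mpr (hM₀ ψ (Or.inl h))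
        intro a ha
        exact hagree a ⟨a, Set.mem_biUnion h ha, rfl⟩
      · rcases hp with hp | hp
        · refine (holds_congr' ?_).mpr (hM₀ _ (Or.inr ⟨p, hp, rfl⟩))
          intro a ha
          rw [atoms_con'] at ha
          have hpR : p ∈ R := hSR hp
          rcases ha with rfl | rfl | rfl <;> exact hagree _ hpR
        · rw [holds_con']
          have h1 : XAtom.orig p ∈ M := by simp [hMdef, xproj]; intro h; exact absurd h hp
          have h2 : XAtom.pos p ∈ M := by simp [hMdef, xproj]; intro h; exact absurd h hp
          have h3 : XAtom.neg p ∉ M := by simp [hMdef, xproj]; intro h; exact absurd h hp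
          exact ⟨by simp [h1, h2], by simp [h1, h3]⟩
    intro p
    constructor
    · intro hp hneg
      have hcp : (deltap p).con.holds M := hMmod _ (Or.inr ⟨p, hp, rfl⟩)
      have hjp : (deltap p).jus.holds M := by
        rw [holds_con'] at hcp; rw [holds_jus']; tauto
      have := hneg M hMmod
      exact this hjp
    · intro hneg
      by_contra hp
      have hpS : p ∉ S := fun h => hp (Or.inl h)
      have hpR : p ∈ R := by
        by_contra h
        exact hp (Or.inr h)
      apply hneg
      intro M' hM' hjus
      -- build a model of V ∪ consS (S ∪ {p}) to contradict maximality of S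
      set N : Set (XAtom α) := {x | (x = XAtom.orig p ∧ XAtom.pos p ∈ M') ∨
          (x ≠ XAtom.orig p ∧ x ∈ M')} with hNdef
      have hagN : ∀ x : XAtom α, x ≠ XAtom.orig p → (x ∈ N ↔ x ∈ M') := by
        intro x hx
        simp [hNdef, hx]
      have hjus' : (XAtom.pos p ∈ M' ↔ XAtom.neg p ∉ M') := (holds_jus' M' p).mp hjus
      have hNmod : ∀ ψ ∈ V ∪ consS (S ∪ {p}), ψ.holds N := by
        rintro ψ (h | ⟨q, hq, rfl⟩)
        · refine (holds_congr' ?_).mpr (hM' ψ (Or.inl h))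
          intro a ha
          refine hagN a ?_
          rintro rfl
          exact horig p (Set.mem_biUnion h ha)
        · rcases hq with hq | hq
          · refine (holds_congr' ?_).mpr (hM' _ (Or.inr ⟨q, Or.inl hq, rfl⟩))
            intro a ha
            rw [atoms_con'] at ha
            have hqp : q ≠ p := fun h => hpS (h ▸ hq)
            rcases ha with rfl | rfl | rfl <;> refine hagN _ ?_ <;> simp [hqp]
          · rcases hq with rfl
            rw [holds_con']
            have h1 : XAtom.orig q ∈ N ↔ XAtom.pos q ∈ M' := by simp [hNdef]
            have h2 : XAtom.pos q ∈ N ↔ XAtom.pos q ∈ M' := hagN _ (by simp)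
            have h3 : XAtom.neg q ∈ N ↔ XAtom.neg q ∈ M' := hagN _ (by simp)
            rw [h1, h2, h3]
            constructor
            · rfl
            · rw [not_iff_comm, ← hjus']
        -- done
      have hmem : S ∪ {p} ∈ F := by
        refine ⟨Set.union_subset hSR (by simpa using hpR), N, hNmod⟩
      have := hSmax (S ∪ {p}) hmem (Set.subset_union_left)
      simp only [id] at this
      exact hpS (this ▸ (Set.mem_union_right S rfl : p ∈ S ∪ {p}))
  · -- inconsistent case
    refine ⟨∅, fun p => ?_⟩
    have hbot : Fml.neg (deltap p).jus ∈ Cn (V ∪ consS (∅ : Set α)) := by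
      intro M hM
      exact absurd ⟨M, fun ψ h => hM ψ (Or.inl h)⟩ hcon
    simp only [Set.mem_empty_iff_false, false_iff, not_not]
    exact hbot

lemma exists_extension (W : Set (Fml α)) (hW : W.Finite) :
    ∃ E, E ∈ Exts W := by
  have hfin : (vars (signedSet W)).Finite :=
    Set.Finite.biUnion (hW.image _) (fun φ _ => atoms_finite' φ)
  have horig : ∀ q : α, XAtom.orig q ∉ vars (signedSet W) := by
    intro q hq
    rw [vars, Set.mem_iUnion₂] at hq
    obtain ⟨ψ, hψ, ha⟩ := hq
    obtain ⟨φ, _, rfl⟩ := hψ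
    exact orig_not_mem_signedAux q φ true ha
  obtain ⟨S, hS⟩ := exists_fix (signedSet W) hfin horig
  exact ⟨_, isExtension_of_fix _ S hS⟩

end Aux

/-- For every finite `W ⊆ L_Σ`, `C_p^±(W) ⊆ C_s^±(W) ⊆ C_c^±(W)`. -/
theorem signed_increasing {α : Type} (W : Set (Fml α)) (hW : W.Finite) :
    CpPM W ⊆ CsPM W ∧ CsPM W ⊆ CcPM W := by
  constructor
  · intro φ hφ E hE
    exact Cn_mono' (Set.union_subset_union_right _ (Set.biInter_subset_of_mem hE)) hφ
  · intro φ hφ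
    obtain ⟨E, hE⟩ := exists_extension W hW
    exact ⟨E, hE, hφ E hE⟩

end Para
end
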